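/- Let $F$ be a finite field with $q$ elements, $n \geq 1$, $1 \leq r \leq n$. The number of $n \times n$ matrices $X$ over $F$ with $\mathrm{rank}(X) = r$ and $(1,1)$-entry equal to $1$ is $q^{-1}|M(n,n,r,q)| - q^{r-1}|M(n-1,n-1,r,q)| + q^{r-2}|M(n-1,n-1,r-1,q)|$. -/

import Mathlib

open Matrix Module

variable {F : Type} [Field F]

lemma finrank_submodule_prod {V W : Type*} [AddCommGroup V] [Module F V] [AddCommGroup W]
    [Module F W] [FiniteDimensional F V] [FiniteDimensional F W]
    (p : Submodule F V) (q : Submodule F W) :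
    finrank F (p.prod q) = finrank F p + finrank F q := by
  have e : (p.prod q) ≃ₗ[F] p × q :=
    { toFun := fun x => (⟨x.1.1, x.2.1⟩, ⟨x.1.2, x.2.2⟩)
      invFun := fun x => ⟨(x.1.1, x.2.1), ⟨x.1.2, x.2.2⟩⟩
      map_add' := fun x y => rfl
      map_smul' := fun c x => rfl
      left_inv := fun x => rfl
      right_inv := fun x => rfl }
  rw [e.finrank_eq, Module.finrank_prod]

lemma range_prodMap' {V₁ V₂ W₁ W₂ : Type*} [AddCommGroup V₁] [Module F V₁] [AddCommGroup V₂]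
    [Module F V₂] [AddCommGroup W₁] [Module F W₁] [AddCommGroup W₂] [Module F W₂]
    (f : V₁ →ₗ[F] W₁) (g : V₂ →ₗ[F] W₂) :
    LinearMap.range (f.prodMap g) = (LinearMap.range f).prod (LinearMap.range g) := by
  ext ⟨a, b⟩
  simp only [LinearMap.mem_range, Submodule.mem_prod, LinearMap.prodMap_apply, Prod.mk.injEq,
    Prod.exists]
  constructor
  · rintro ⟨x, y, hx, hy⟩; exact ⟨⟨x, hx⟩, ⟨y, hy⟩⟩
  · rintro ⟨⟨x, hx⟩, ⟨y, hy⟩⟩; exact ⟨x, y, hx, hy⟩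

lemma rank_fromBlocks_zero {l m o p : Type*} [Fintype l] [Fintype m] [Fintype o] [Fintype p]
    (A : Matrix l m F) (D : Matrix o p F) :
    (fromBlocks A 0 0 D).rank = A.rank + D.rank := by
  classical
  let e₁ := LinearEquiv.sumArrowLequivProdArrow m p F F
  let e₂ := LinearEquiv.sumArrowLequivProdArrow l o F F
  have key : (fromBlocks A 0 0 D).mulVecLin =
      e₂.symm.toLinearMap ∘ₗ (A.mulVecLin.prodMap D.mulVecLin) ∘ₗ e₁.toLinearMap := by
    refine LinearMap.ext fun x => ?_
    simp [fromBlocks_mulVec, LinearEquiv.sumArrowLequivProdArrow,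
      Equiv.sumArrowEquivProdArrow, Matrix.mulVecLin_apply, Sum.elim_comp_inl_inr]
    rfl
  rw [Matrix.rank, key]
  rw [LinearMap.range_comp, LinearMap.range_comp_of_range_eq_top _ e₁.range,
    LinearEquiv.finrank_map_eq, range_prodMap', finrank_submodule_prod]
  rfl

lemma rank_fromBlocks_of_invertible₁₁ {l m n : Type*} [Fintype l] [Fintype m] [Fintype n]
    [DecidableEq l] [DecidableEq m] [DecidableEq n]
    (A : Matrix m m F) [Invertible A] (B : Matrix m n F) (C : Matrix l m F) (D : Matrix l n F) :
    (fromBlocks A B C D).rank = Fintype.card m + (D - C * ⅟A * B).rank := by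
  rw [fromBlocks_eq_of_invertible₁₁ A B C D]
  rw [Matrix.rank_mul_eq_left_of_isUnit_det, Matrix.rank_mul_eq_right_of_isUnit_det,
    rank_fromBlocks_zero, Matrix.rank_of_isUnit A (isUnit_of_invertible A)]
  · rw [Matrix.det_fromBlocks_zero₁₂]; simp
  · rw [Matrix.det_fromBlocks_zero₂₁]; simp

lemma rank_fromBlocks_one {n' : ℕ}
    (b : Matrix (Fin 1) (Fin n') F) (c : Matrix (Fin n') (Fin 1) F)
    (D : Matrix (Fin n') (Fin n') F) :
    (fromBlocks (1 : Matrix (Fin 1) (Fin 1) F) b c D).rank = (D - c * b).rank + 1 := by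
  have : Invertible (1 : Matrix (Fin 1) (Fin 1) F) := invertibleOne
  rw [rank_fromBlocks_of_invertible₁₁ (1 : Matrix (Fin 1) (Fin 1) F) b c D]
  simp [add_comm]

/-- The bijection behind the count of rank-`r'+1` matrices with `(1,1)`-entry `1`. -/
noncomputable def entryOneEquiv (n' r' : ℕ) :
    {Y : Matrix (Fin 1 ⊕ Fin n') (Fin 1 ⊕ Fin n') F //
        Y.rank = r' + 1 ∧ Y (Sum.inl 0) (Sum.inl 0) = 1} ≃
      (Matrix (Fin 1) (Fin n') F) × (Matrix (Fin n') (Fin 1) F) ×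
        {E : Matrix (Fin n') (Fin n') F // E.rank = r'} where
  toFun := fun ⟨Y, hrank, hone⟩ => ⟨Y.toBlocks₁₂, Y.toBlocks₂₁,
    ⟨Y.toBlocks₂₂ - Y.toBlocks₂₁ * Y.toBlocks₁₂, by
      have h11 : Y.toBlocks₁₁ = 1 := by
        ext i j
        fin_cases i; fin_cases j
        simpa [toBlocks₁₁] using hone
      have hY : Y = fromBlocks 1 Y.toBlocks₁₂ Y.toBlocks₂₁ Y.toBlocks₂₂ := by
        rw [← h11, fromBlocks_toBlocks]
      rw [hY, rank_fromBlocks_one] at hrank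
      omega⟩⟩
  invFun bcE := ⟨fromBlocks 1 bcE.1 bcE.2.1 (bcE.2.2.1 + bcE.2.1 * bcE.1), by
    constructor
    · rw [rank_fromBlocks_one, add_sub_cancel_right, bcE.2.2.2]
    · simp [fromBlocks]⟩
  left_inv := by
    rintro ⟨Y, hrank, hone⟩
    have h11 : Y.toBlocks₁₁ = 1 := by
      ext i j
      fin_cases i; fin_cases j
      simpa [toBlocks₁₁] using hone
    apply Subtype.ext
    simp only [sub_add_cancel]
    conv_rhs => rw [← fromBlocks_toBlocks Y, h11]
  right_inv := by
    rintro ⟨b, c, E, hE⟩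
    simp [toBlocks_fromBlocks₁₂, toBlocks_fromBlocks₂₁, toBlocks_fromBlocks₂₂]

variable [Fintype F]
set_option linter.unusedSectionVars false

lemma card_full_col_rank {n r : ℕ} (h : r ≤ n) :
    Nat.card {B : Matrix (Fin n) (Fin r) F // B.rank = r} =
      ∏ i : Fin r, (Fintype.card F ^ n - Fintype.card F ^ i.val) := by
  classical
  have e : {B : Matrix (Fin n) (Fin r) F // B.rank = r} ≃
      {s : Fin r → (Fin n → F) // LinearIndependent F s} := by
    refine Equiv.subtypeEquiv ⟨fun B => fun i j => B j i, fun s => Matrix.of fun j i => s i j,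
      fun B => rfl, fun s => rfl⟩ (fun B => ?_)
    have hs : (fun i j => B j i) = (Bᵀ : Fin r → Fin n → F) := rfl
    show B.rank = r ↔ LinearIndependent F (fun i j => B j i)
    rw [B.rank_eq_finrank_span_cols]
    show finrank F (Submodule.span F (Set.range (fun i j => B j i))) = r ↔
      LinearIndependent F (fun i j => B j i)
    rw [linearIndependent_iff_card_eq_finrank_span, Fintype.card_fin, Set.finrank]
    exact ⟨fun hh => hh.symm, fun hh => hh.symm⟩
  rw [Nat.card_congr e, card_linearIndependent]
  · simp [Module.finrank_fintype_fun_eq_card]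
  · simpa [Module.finrank_fintype_fun_eq_card] using h

lemma card_full_row_rank {r m : ℕ} (h : r ≤ m) :
    Nat.card {C : Matrix (Fin r) (Fin m) F // C.rank = r} =
      ∏ i : Fin r, (Fintype.card F ^ m - Fintype.card F ^ i.val) := by
  rw [← card_full_col_rank h]
  exact Nat.card_congr (Equiv.subtypeEquiv ⟨fun C => Cᵀ, fun B => Bᵀ,
    fun C => transpose_transpose C, fun B => transpose_transpose B⟩
    (fun C => by simp [Matrix.rank_transpose]))

lemma exists_left_inv {n r : ℕ} {B : Matrix (Fin n) (Fin r) F} (h : B.rank = r) :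
    ∃ L : Matrix (Fin r) (Fin n) F, L * B = 1 := by
  have hker : LinearMap.ker B.mulVecLin = ⊥ := by
    have h1 := LinearMap.finrank_range_add_finrank_ker B.mulVecLin
    rw [show Module.finrank F (LinearMap.range B.mulVecLin) = B.rank from rfl, h,
      Module.finrank_fintype_fun_eq_card, Fintype.card_fin] at h1
    have h2 : Module.finrank F (LinearMap.ker B.mulVecLin) = 0 := by omega
    exact Submodule.finrank_eq_zero.mp h2
  obtain ⟨g, hg⟩ := LinearMap.exists_leftInverse_of_injective B.mulVecLin hker
  refine ⟨LinearMap.toMatrix' g, ?_⟩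
  have : LinearMap.toMatrix' (g.comp B.mulVecLin) =
      LinearMap.toMatrix' g * LinearMap.toMatrix' B.mulVecLin := by
    rw [← Matrix.toLin'_apply'] at *
    exact LinearMap.toMatrix'_comp g (Matrix.toLin' B)
  rw [hg] at this
  simpa [← Matrix.toLin'_apply', LinearMap.toMatrix'_toLin'] using this.symm

lemma exists_right_inv {r m : ℕ} {C : Matrix (Fin r) (Fin m) F} (h : C.rank = r) :
    ∃ R : Matrix (Fin m) (Fin r) F, C * R = 1 := by
  have hrange : LinearMap.range C.mulVecLin = ⊤ := by
    apply Submodule.eq_top_of_finrank_eq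
    rw [show Module.finrank F (LinearMap.range C.mulVecLin) = C.rank from rfl, h,
      Module.finrank_fintype_fun_eq_card, Fintype.card_fin]
  obtain ⟨g, hg⟩ := C.mulVecLin.exists_rightInverse_of_surjective hrange
  refine ⟨LinearMap.toMatrix' g, ?_⟩
  have : LinearMap.toMatrix' (C.mulVecLin.comp g) =
      LinearMap.toMatrix' C.mulVecLin * LinearMap.toMatrix' g := by
    rw [← Matrix.toLin'_apply'] at *
    exact LinearMap.toMatrix'_comp (Matrix.toLin' C) g
  rw [hg] at this
  simpa [← Matrix.toLin'_apply', LinearMap.toMatrix'_toLin'] using this.symm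


lemma rank_factor_mul {n m r : ℕ} {B : Matrix (Fin n) (Fin r) F} {C : Matrix (Fin r) (Fin m) F}
    (hB : B.rank = r) (hC : C.rank = r) : (B * C).rank = r := by
  obtain ⟨R, hR⟩ := exists_right_inv hC
  refine le_antisymm (le_trans (Matrix.rank_mul_le_left B C) hB.le) ?_
  have : (B * C * R).rank ≤ (B * C).rank := Matrix.rank_mul_le_left _ _
  rwa [Matrix.mul_assoc, hR, Matrix.mul_one, hB] at this


lemma isUnit_of_rank_eq {r : ℕ} {P : Matrix (Fin r) (Fin r) F} (h : P.rank = r) : IsUnit P := by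
  obtain ⟨R, hR⟩ := exists_right_inv h
  exact (Matrix.isUnit_iff_isUnit_det P).mpr (Matrix.isUnit_det_of_right_inverse hR)


lemma exists_factorization {n m r : ℕ} (X : Matrix (Fin n) (Fin m) F) (h : X.rank = r) :
    ∃ (B : Matrix (Fin n) (Fin r) F) (C : Matrix (Fin r) (Fin m) F),
      B.rank = r ∧ C.rank = r ∧ B * C = X := by
  classical
  set W := LinearMap.range X.mulVecLin with hW
  have hfin : Module.finrank F W = r := h
  have hr : Module.finrank F (Fin r → F) = r := by
    rw [Module.finrank_fintype_fun_eq_card, Fintype.card_fin]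
  let e : W ≃ₗ[F] (Fin r → F) := LinearEquiv.ofFinrankEq _ _ (by rw [hfin, hr])
  let g₁ : (Fin r → F) →ₗ[F] (Fin n → F) := W.subtype ∘ₗ e.symm.toLinearMap
  let g₂ : (Fin m → F) →ₗ[F] (Fin r → F) := e.toLinearMap ∘ₗ X.mulVecLin.rangeRestrict
  refine ⟨LinearMap.toMatrix' g₁, LinearMap.toMatrix' g₂, ?_, ?_, ?_⟩
  · show Module.finrank F (LinearMap.range (LinearMap.toMatrix' g₁).mulVecLin) = r
    rw [show (LinearMap.toMatrix' g₁).mulVecLin = g₁ by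
      rw [← Matrix.toLin'_apply', Matrix.toLin'_toMatrix']]
    rw [show LinearMap.range g₁ = W by
      rw [LinearMap.range_comp_of_range_eq_top _ (LinearEquiv.range e.symm),
        Submodule.range_subtype]]
    exact hfin
  · show Module.finrank F (LinearMap.range (LinearMap.toMatrix' g₂).mulVecLin) = r
    rw [show (LinearMap.toMatrix' g₂).mulVecLin = g₂ by
      rw [← Matrix.toLin'_apply', Matrix.toLin'_toMatrix']]
    rw [show LinearMap.range g₂ = ⊤ by
      rw [LinearMap.range_comp_of_range_eq_top, LinearEquiv.range]
      rw [LinearMap.range_rangeRestrict]]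
    rw [finrank_top, hr]
  · have hcomp : g₁ ∘ₗ g₂ = X.mulVecLin := by
      ext x
      simp [g₁, g₂]
    have := LinearMap.toMatrix'_comp g₁ g₂
    rw [hcomp] at this
    rw [← this, ← Matrix.toLin'_apply']
    rw [LinearMap.toMatrix'_toLin']

lemma fiber_card {n m r : ℕ}
    (X : {X : Matrix (Fin n) (Fin m) F // X.rank = r}) :
    Nat.card {BC : {B : Matrix (Fin n) (Fin r) F // B.rank = r} ×
        {C : Matrix (Fin r) (Fin m) F // C.rank = r} //
        BC.1.1 * BC.2.1 = X.1} = Nat.card (GL (Fin r) F) := by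
  classical
  obtain ⟨B₀, C₀, hB₀, hC₀, hBC₀⟩ := exists_factorization X.1 X.2
  obtain ⟨L₀, hL₀⟩ := exists_left_inv hB₀
  symm
  apply Nat.card_congr
  have hdet : ∀ P : GL (Fin r) F, IsUnit (P : Matrix (Fin r) (Fin r) F).det :=
    fun P => (Matrix.isUnit_iff_isUnit_det _).mp P.isUnit
  refine Equiv.ofBijective (fun P => ⟨(⟨B₀ * (P : Matrix (Fin r) (Fin r) F), by
      rw [Matrix.rank_mul_eq_left_of_isUnit_det _ _ (hdet P)]; exact hB₀⟩,
    ⟨((P⁻¹ : GL (Fin r) F) : Matrix (Fin r) (Fin r) F) * C₀, by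
      rw [Matrix.rank_mul_eq_right_of_isUnit_det _ _ (hdet P⁻¹)]; exact hC₀⟩), by
      show B₀ * (P : Matrix (Fin r) (Fin r) F) *
        (((P⁻¹ : GL (Fin r) F) : Matrix (Fin r) (Fin r) F) * C₀) = X.1
      rw [Matrix.mul_assoc, ← Matrix.mul_assoc (P : Matrix (Fin r) (Fin r) F),
        P.mul_inv, Matrix.one_mul, hBC₀]⟩) ⟨?_, ?_⟩
  · intro P P' hPP'
    have h1 : B₀ * (P : Matrix (Fin r) (Fin r) F) = B₀ * (P' : Matrix (Fin r) (Fin r) F) := by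
      have := congrArg (fun z => (z.1.1.1 : Matrix (Fin n) (Fin r) F)) hPP'
      exact this
    have h2 := congrArg (fun Z => L₀ * Z) h1
    simp only [← Matrix.mul_assoc, hL₀, Matrix.one_mul] at h2
    exact Units.ext h2
  · rintro ⟨⟨⟨B, hB⟩, ⟨C, hC⟩⟩, hf⟩
    obtain ⟨R, hR⟩ := exists_right_inv hC
    have hf' : B * C = X.1 := hf
    have hBX : B = X.1 * R := by
      rw [← hf', Matrix.mul_assoc, hR, Matrix.mul_one]
    set Pm := L₀ * B with hPm
    have hB₀P : B₀ * Pm = B := by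
      rw [hPm, hBX, ← hBC₀]
      rw [show B₀ * C₀ * R = B₀ * (C₀ * R) from Matrix.mul_assoc _ _ _]
      rw [← Matrix.mul_assoc L₀, ← Matrix.mul_assoc B₀, hL₀, Matrix.mul_one]
    have hPmrank : Pm.rank = r := by
      refine le_antisymm (le_trans (Matrix.rank_le_card_width Pm) (by simp)) ?_
      have h1 : B.rank ≤ Pm.rank := by
        rw [← hB₀P]; exact Matrix.rank_mul_le_right B₀ Pm
      rw [hB] at h1; exact h1
    have hPmunit : IsUnit Pm := isUnit_of_rank_eq hPmrank
    obtain ⟨u, hu⟩ := hPmunit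
    have hC₀eq : Pm * C = C₀ := by
      have h1 : B₀ * (Pm * C) = B₀ * C₀ := by
        rw [← Matrix.mul_assoc, hB₀P, hf', hBC₀]
      have h2 := congrArg (fun Z => L₀ * Z) h1
      simp only [← Matrix.mul_assoc, hL₀, Matrix.one_mul] at h2
      exact h2
    refine ⟨u, ?_⟩
    apply Subtype.ext
    apply Prod.ext
    · apply Subtype.ext
      show B₀ * (u : Matrix (Fin r) (Fin r) F) = B
      rw [hu, hB₀P]
    · apply Subtype.ext
      show ((u⁻¹ : (Matrix (Fin r) (Fin r) F)ˣ) : Matrix (Fin r) (Fin r) F) * C₀ = C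
      rw [← hC₀eq, ← hu, ← Matrix.mul_assoc, u.inv_mul, Matrix.one_mul]

lemma card_rank_mul_card_GL (n m r : ℕ) :
    Nat.card {X : Matrix (Fin n) (Fin m) F // X.rank = r} * Nat.card (GL (Fin r) F) =
      Nat.card {B : Matrix (Fin n) (Fin r) F // B.rank = r} *
        Nat.card {C : Matrix (Fin r) (Fin m) F // C.rank = r} := by
  classical
  let S := {B : Matrix (Fin n) (Fin r) F // B.rank = r} ×
      {C : Matrix (Fin r) (Fin m) F // C.rank = r}
  let T := {X : Matrix (Fin n) (Fin m) F // X.rank = r}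
  let f : S → T := fun BC => ⟨BC.1.1 * BC.2.1, rank_factor_mul BC.1.2 BC.2.2⟩
  have key : Nat.card S = Nat.card T * Nat.card (GL (Fin r) F) := by
    rw [Nat.card_congr (Equiv.sigmaFiberEquiv f).symm, Nat.card_eq_fintype_card,
      Fintype.card_sigma]
    have : ∀ X : T, Fintype.card {BC : S // f BC = X} = Nat.card (GL (Fin r) F) := by
      intro X
      rw [← Nat.card_eq_fintype_card]
      have : {BC : S // f BC = X} ≃ {BC : S // BC.1.1 * BC.2.1 = X.1} := by
        apply Equiv.subtypeEquivRight
        intro BC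
        constructor
        · intro h; exact congrArg Subtype.val h
        · intro h; exact Subtype.ext h
      rw [Nat.card_congr this]
      exact fiber_card X
    rw [Finset.sum_congr rfl (fun X _ => this X), Finset.sum_const, Finset.card_univ,
      smul_eq_mul, Nat.card_eq_fintype_card, Nat.card_eq_fintype_card]
  rw [← key, Nat.card_prod]

/-- The product `∏_{j<s} (Q^k - Q^j)`. -/
noncomputable def Pp (Q : ℚ) (k s : ℕ) : ℚ := ∏ j ∈ Finset.range s, (Q ^ k - Q ^ j)

lemma Pp_succ (Q : ℚ) (k s : ℕ) : Pp Q k (s + 1) = Pp Q k s * (Q ^ k - Q ^ s) :=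
  Finset.prod_range_succ _ _

lemma Pp_succ_succ (Q : ℚ) (k s : ℕ) :
    Pp Q (k + 1) (s + 1) = (Q ^ (k + 1) - 1) * (Q ^ s * Pp Q k s) := by
  rw [Pp, Finset.prod_range_succ']
  have : ∀ j, Q ^ (k + 1) - Q ^ (j + 1) = Q * (Q ^ k - Q ^ j) := by
    intro j; rw [pow_succ, pow_succ]; ring
  simp_rw [this, Finset.prod_mul_distrib, Finset.prod_const, Finset.card_range, pow_zero, Pp]
  ring

lemma natCast_prod_eq_Pp {q k s : ℕ} (hq : 1 ≤ q) (h : s ≤ k) :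
    ((∏ i : Fin s, (q ^ k - q ^ i.val) : ℕ) : ℚ) = Pp (q : ℚ) k s := by
  rw [Fin.prod_univ_eq_prod_range (fun i => q ^ k - q ^ i) s, Pp, Nat.cast_prod]
  refine Finset.prod_congr rfl fun j hj => ?_
  have hjk : j ≤ k := le_trans (le_of_lt (Finset.mem_range.mp hj)) h
  rw [Nat.cast_sub (Nat.pow_le_pow_right hq hjk), Nat.cast_pow, Nat.cast_pow]

lemma Pp_pos {q k s : ℕ} (hq : 2 ≤ q) (h : s ≤ k) : 0 < Pp (q : ℚ) k s := by
  apply Finset.prod_pos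
  intro j hj
  have hjk : j < k := lt_of_lt_of_le (Finset.mem_range.mp hj) h
  have : (q : ℚ) ^ j < (q : ℚ) ^ k := by
    apply pow_lt_pow_right₀ _ hjk
    exact_mod_cast by omega
  linarith

lemma card_rank_rat {n m r : ℕ} (hrn : r ≤ n) (hrm : r ≤ m) :
    (Nat.card {X : Matrix (Fin n) (Fin m) F // X.rank = r} : ℚ) *
      Pp (Fintype.card F : ℚ) r r =
      Pp (Fintype.card F : ℚ) n r * Pp (Fintype.card F : ℚ) m r := by
  have hq : 1 ≤ Fintype.card F := Fintype.card_pos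
  have h := card_rank_mul_card_GL (F := F) n m r
  rw [Matrix.card_GL_field, card_full_col_rank hrn, card_full_row_rank hrm] at h
  have := congrArg (fun z : ℕ => (z : ℚ)) h
  simpa [Nat.cast_mul, natCast_prod_eq_Pp hq hrn, natCast_prod_eq_Pp hq hrm,
    natCast_prod_eq_Pp hq (le_refl r)] using this

lemma card_sq_rank_rat {k r : ℕ} (hq2 : 2 ≤ Fintype.card F) :
    (Nat.card {X : Matrix (Fin k) (Fin k) F // X.rank = r} : ℚ) =
      Pp (Fintype.card F : ℚ) k r * Pp (Fintype.card F : ℚ) k r /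
        Pp (Fintype.card F : ℚ) r r := by
  by_cases h : r ≤ k
  · have hP := Pp_pos (k := r) (s := r) hq2 (le_refl r)
    rw [← card_rank_rat h h]
    field_simp
  · have he : IsEmpty {X : Matrix (Fin k) (Fin k) F // X.rank = r} := by
      constructor
      rintro ⟨X, hX⟩
      have := X.rank_le_card_width
      rw [hX, Fintype.card_fin] at this
      omega
    have hzero : Pp (Fintype.card F : ℚ) k r = 0 := by
      apply Finset.prod_eq_zero (Finset.mem_range.mpr (by omega : k < r))
      ring
    rw [Nat.card_of_isEmpty, hzero]
    simp

lemma card_entry_one (n' r' : ℕ) :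
    Nat.card {Y : Matrix (Fin 1 ⊕ Fin n') (Fin 1 ⊕ Fin n') F //
        Y.rank = r' + 1 ∧ Y (Sum.inl 0) (Sum.inl 0) = 1} =
      Fintype.card F ^ n' * (Fintype.card F ^ n' *
        Nat.card {E : Matrix (Fin n') (Fin n') F // E.rank = r'}) := by
  rw [Nat.card_congr (entryOneEquiv n' r'), Nat.card_prod, Nat.card_prod]
  congr 1
  · rw [Nat.card_eq_fintype_card]
    show Fintype.card (Fin 1 → Fin n' → F) = Fintype.card F ^ n'
    simp [Fintype.card_fun]
  · congr 1
    rw [Nat.card_eq_fintype_card]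
    show Fintype.card (Fin n' → Fin 1 → F) = Fintype.card F ^ n'
    simp [Fintype.card_fun]

/-- the number of `n × n` matrices of rank `r` over `F_q` with `(1,1)`-entry `1`. -/
theorem stmt3 (F : Type) [Field F] [Fintype F] (q : ℕ) (hq : q = Fintype.card F)
    (n r : ℕ) (hn : 1 ≤ n) (hr : 1 ≤ r) (hrn : r ≤ n) :
    (Nat.card {X : Matrix (Fin n) (Fin n) F // X.rank = r ∧ X ⟨0, hn⟩ ⟨0, hn⟩ = 1} : ℚ) =
      (q : ℚ)⁻¹ * Nat.card {X : Matrix (Fin n) (Fin n) F // X.rank = r} -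
      (q : ℚ) ^ ((r : ℤ) - 1) *
        Nat.card {X : Matrix (Fin (n - 1)) (Fin (n - 1)) F // X.rank = r} +
      (q : ℚ) ^ ((r : ℤ) - 2) *
        Nat.card {X : Matrix (Fin (n - 1)) (Fin (n - 1)) F // X.rank = r - 1} := by
  subst hq
  obtain ⟨n', rfl⟩ : ∃ n', n = n' + 1 := ⟨n - 1, by omega⟩
  obtain ⟨r', rfl⟩ : ∃ r', r = r' + 1 := ⟨r - 1, by omega⟩
  have hq2 : 2 ≤ Fintype.card F := Fintype.one_lt_card
  have hrn' : r' ≤ n' := by omega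
  have hsum : n' + 1 = 1 + n' := by omega
  let e : Fin (n' + 1) ≃ Fin 1 ⊕ Fin n' := (finCongr hsum).trans finSumFinEquiv.symm
  have hsymm : e.symm (Sum.inl 0) = (⟨0, hn⟩ : Fin (n' + 1)) := by
    apply Fin.ext
    simp [e]
  have hLHS : Nat.card {X : Matrix (Fin (n' + 1)) (Fin (n' + 1)) F //
      X.rank = r' + 1 ∧ X ⟨0, hn⟩ ⟨0, hn⟩ = 1} =
      Fintype.card F ^ n' * (Fintype.card F ^ n' *
        Nat.card {E : Matrix (Fin n') (Fin n') F // E.rank = r'}) := by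
    rw [← card_entry_one n' r']
    apply Nat.card_congr
    refine Equiv.subtypeEquiv (Matrix.reindex e e) fun X => ?_
    rw [Matrix.rank_reindex]
    simp [Matrix.reindex_apply, Matrix.submatrix_apply, hsymm]
  rw [hLHS, Nat.cast_mul, Nat.cast_mul, Nat.cast_pow]
  rw [card_sq_rank_rat (k := n' + 1) (r := r' + 1) hq2]
  rw [card_sq_rank_rat (k := n' + 1 - 1) (r := r' + 1) hq2]
  have hconv : Nat.card {X : Matrix (Fin (n' + 1 - 1)) (Fin (n' + 1 - 1)) F //
      X.rank = r' + 1 - 1} = Nat.card {X : Matrix (Fin n') (Fin n') F // X.rank = r'} :=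
    Nat.card_congr (Equiv.refl _)
  rw [hconv, card_sq_rank_rat (k := n') (r := r') hq2]
  simp only [Nat.add_sub_cancel]
  set Q : ℚ := (Fintype.card F : ℚ) with hQ
  have hQ2 : (2 : ℚ) ≤ Q := by rw [hQ]; exact_mod_cast hq2
  have hQ0 : Q ≠ 0 := by linarith
  have hz1 : Q ^ (((r' + 1 : ℕ) : ℤ) - 1) = Q ^ r' := by
    rw [show ((r' + 1 : ℕ) : ℤ) - 1 = (r' : ℤ) by push_cast; ring, zpow_natCast]
  have hz2 : Q ^ (((r' + 1 : ℕ) : ℤ) - 2) = Q ^ r' / Q := by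
    rw [show ((r' + 1 : ℕ) : ℤ) - 2 = (r' : ℤ) - 1 by push_cast; ring, zpow_sub₀ hQ0,
      zpow_natCast, zpow_one]
  rw [hz1, hz2]
  rw [Pp_succ_succ Q n' r', Pp_succ_succ Q r' r', Pp_succ Q n' r']
  have hδ : Pp Q r' r' ≠ 0 := ne_of_gt (Pp_pos hq2 le_rfl)
  have hQ1 : (1 : ℚ) < Q := by linarith
  have hden : Q ^ (r' + 1) - 1 ≠ 0 := by
    have : (1 : ℚ) < Q ^ (r' + 1) := one_lt_pow₀ hQ1 (Nat.succ_ne_zero r')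
    linarith
  field_simp
  ring
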